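/- Fix integers U, L, s, g with 1 ≤ s < U, g ≥ 0 and s + g + 1 ≤ L. The number of functions f : {1,…,U} → {1,…,L} such that each of the levels 1,…,s+g contains at most one packet, exactly s of these s+g levels contain exactly one packet (so g of them are empty), and level s+g+1 contains at least two packets, equals C(U,s)·s!·C(s+g,s)·[ (L−s−g)^{U−s} − (L−s−g−1)^{U−s} − (U−s)·(L−s−g−1)^{U−s−1} ] (equation (6) in Appendix A: the probability P(S_{i,g}|U_i) of exactly s successful packets with g idle power levels above the first power collision, multiplied by L^U). -/

import Mathlib

/-- Number of packets (arguments) mapped to power level `l` by `f`.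
Levels are indexed `0, …, L-1` from highest to lowest received power
(index `i` corresponds to the paper's level `i+1`). -/
def levelCount {U L : ℕ} (f : Fin U → Fin L) (l : Fin L) : ℕ :=
  (Finset.univ.filter (fun u => f u = l)).card

open Finset

section Aux

variable {α β : Type*} [Fintype α] [DecidableEq α] [Fintype β] [DecidableEq β]

theorem count_avoid (b : β) :
    (univ.filter (fun f : α → β => ∀ x, f x ≠ b)).card
      = (Fintype.card β - 1) ^ Fintype.card α := by
  have h : univ.filter (fun f : α → β => ∀ x, f x ≠ b)
      = Fintype.piFinset (fun _ => univ.erase b) := by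
    ext f; simp [Fintype.mem_piFinset]
  rw [h, Fintype.card_piFinset]
  simp [Finset.card_erase_of_mem]

theorem count_unique (b : β) (x : α) :
    (univ.filter (fun f : α → β => f x = b ∧ ∀ y, y ≠ x → f y ≠ b)).card
      = (Fintype.card β - 1) ^ (Fintype.card α - 1) := by
  have h : univ.filter (fun f : α → β => f x = b ∧ ∀ y, y ≠ x → f y ≠ b)
      = Fintype.piFinset (fun y => if y = x then {b} else univ.erase b) := by
    ext f
    simp only [Fintype.mem_piFinset, mem_filter, mem_univ, true_and]
    constructor
    · rintro ⟨h1, h2⟩ y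
      by_cases hy : y = x
      · simp [hy, h1]
      · simp [hy, h2 y hy]
    · intro h
      refine ⟨by have := h x; simpa using this, fun y hy => ?_⟩
      have := h y; simp [hy] at this; exact this
  rw [h, Fintype.card_piFinset]
  rw [← Finset.prod_erase_mul _ _ (mem_univ x)]
  have h2 : ∀ y ∈ univ.erase x, #(if y = x then ({b} : Finset β) else univ.erase b)
      = Fintype.card β - 1 := by
    intro y hy
    simp [Finset.mem_erase.1 hy |>.1, Finset.card_erase_of_mem]
  rw [Finset.prod_congr rfl h2, Finset.prod_const,
    Finset.card_erase_of_mem (mem_univ x)]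
  simp

theorem count_tail (b : β) :
    (univ.filter (fun f : α → β => 2 ≤ #(univ.filter (fun x => f x = b)))).card
      + (Fintype.card β - 1) ^ Fintype.card α
      + Fintype.card α * (Fintype.card β - 1) ^ (Fintype.card α - 1)
      = Fintype.card β ^ Fintype.card α := by
  set c : (α → β) → ℕ := fun f => #(univ.filter (fun x => f x = b)) with hc
  have h0 : (univ.filter (fun f : α → β => c f = 0)).card
      = (Fintype.card β - 1) ^ Fintype.card α := by
    rw [← count_avoid b]
    congr 1
    apply Finset.filter_congr
    intro f _
    simp only [hc, Finset.card_eq_zero, Finset.filter_eq_empty_iff, mem_univ, true_implies,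
      eq_iff_iff]
  have h1 : (univ.filter (fun f : α → β => c f = 1)).card
      = Fintype.card α * (Fintype.card β - 1) ^ (Fintype.card α - 1) := by
    have hb : (univ.filter (fun f : α → β => c f = 1))
        = univ.biUnion (fun x : α =>
            univ.filter (fun f : α → β => f x = b ∧ ∀ y, y ≠ x → f y ≠ b)) := by
      ext f
      simp only [mem_filter, mem_univ, true_and, Finset.mem_biUnion]
      constructor
      · intro h
        obtain ⟨a, ha⟩ := Finset.card_eq_one.1 h
        refine ⟨a, ?_, fun y hy hyb => ?_⟩
        · have : a ∈ univ.filter (fun x => f x = b) := ha ▸ Finset.mem_singleton_self a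
          exact (mem_filter.1 this).2
        · have : y ∈ univ.filter (fun x => f x = b) := mem_filter.2 ⟨mem_univ y, hyb⟩
          rw [ha, Finset.mem_singleton] at this
          exact hy this
      · rintro ⟨x, hx, hne⟩
        rw [Finset.card_eq_one]
        refine ⟨x, ?_⟩
        ext y
        simp only [mem_filter, mem_univ, true_and, Finset.mem_singleton]
        constructor
        · intro hy; by_contra hne'; exact hne y hne' hy
        · intro hy; subst hy; exact hx
    rw [hb, Finset.card_biUnion]
    · rw [Finset.sum_congr rfl (fun x _ => count_unique b x), Finset.sum_const, smul_eq_mul,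
        Finset.card_univ]
    · intro x _ x' _ hxx'
      apply Finset.disjoint_left.2
      intro f hf hf'
      simp only [mem_filter] at hf hf'
      exact hf'.2.2 x (fun h : x = x' => hxx' h) hf.2.1
  have key := Finset.card_filter_add_card_filter_not
    (s := (univ : Finset (α → β))) (p := fun f => 2 ≤ c f)
  have key2 := Finset.card_filter_add_card_filter_not
    (s := univ.filter (fun f : α → β => ¬ 2 ≤ c f)) (p := fun f => c f = 0)
  rw [Finset.filter_filter, Finset.filter_filter] at key2
  have e1 : (univ.filter fun f : α → β => ¬2 ≤ c f ∧ c f = 0)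
      = univ.filter (fun f : α → β => c f = 0) := by
    apply Finset.filter_congr; intro f _; constructor
    · exact fun h => h.2
    · intro h; omega
  have e2 : (univ.filter fun f : α → β => ¬2 ≤ c f ∧ ¬ c f = 0)
      = univ.filter (fun f : α → β => c f = 1) := by
    apply Finset.filter_congr; intro f _; constructor
    · intro h; omega
    · intro h; omega
  rw [e1, e2, h0, h1] at key2
  rw [← key2, Finset.card_univ] at key
  rw [add_assoc, key, Fintype.card_fun]

theorem card_filter_subtype {γ : Type*} [Fintype γ] (p : γ → Prop) [DecidablePred p]
    (q : γ → Prop) [DecidablePred q] (h : ∀ x, q x → p x) :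
    #(univ.filter fun x : {x // p x} => q x.1) = #(univ.filter q) := by
  refine Finset.card_bij' (fun x _ => x.1) (fun x hx => ⟨x, h x (mem_filter.1 hx).2⟩)
    ?_ ?_ ?_ ?_
  · intro a ha
    simp only [mem_filter, mem_univ, true_and] at ha ⊢
    exact ha
  · intro a ha
    simp only [mem_filter, mem_univ, true_and] at ha ⊢
    exact ha
  · intro a _; rfl
  · intro a _; rfl

theorem low_card {U L : ℕ} (n : ℕ) (f : Fin U → Fin L)
    (hA : ∀ l : Fin L, (l : ℕ) < n → levelCount f l ≤ 1) :
    #(Finset.univ.filter fun l : Fin L => (l : ℕ) < n ∧ levelCount f l = 1)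
      = #(Finset.univ.filter fun u : Fin U => ((f u) : ℕ) < n) := by
  have key : #(univ.filter fun u : Fin U => ((f u) : ℕ) < n)
      = ∑ l ∈ univ.filter (fun l : Fin L => (l : ℕ) < n), levelCount f l := by
    rw [Finset.card_eq_sum_card_fiberwise
      (f := f) (t := univ.filter (fun l : Fin L => (l : ℕ) < n))
      (fun u hu => by simpa using (mem_filter.1 hu).2)]
    refine Finset.sum_congr rfl fun l hl => ?_
    have hl' : (l : ℕ) < n := (mem_filter.1 hl).2
    unfold levelCount
    congr 1
    ext u
    simp only [mem_filter, mem_univ, true_and, and_iff_right_iff_imp]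
    intro hu; rw [hu]; exact hl'
  have split := Finset.sum_filter_add_sum_filter_not
    (univ.filter (fun l : Fin L => (l : ℕ) < n)) (fun l => levelCount f l = 1)
    (fun l => levelCount f l)
  have hzero : ∑ x ∈ (univ.filter (fun l : Fin L => (l : ℕ) < n)).filter
      (fun l => ¬ levelCount f l = 1), levelCount f x = 0 := by
    apply Finset.sum_eq_zero
    intro l hl
    have h1 := (mem_filter.1 hl).2
    have h2 := hA l (mem_filter.1 (mem_filter.1 hl).1).2
    omega
  have hone : ∑ x ∈ (univ.filter (fun l : Fin L => (l : ℕ) < n)).filter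
      (fun l => levelCount f l = 1), levelCount f x
      = #((univ.filter (fun l : Fin L => (l : ℕ) < n)).filter
        (fun l => levelCount f l = 1)) := by
    rw [Finset.sum_congr rfl (fun l hl => (mem_filter.1 hl).2), Finset.sum_const, smul_eq_mul,
      mul_one]
  rw [key, ← split, hzero, hone, add_zero, Finset.filter_filter]

end Aux

/-- Equation (6) in Appendix A: the number of level assignments in which each of the
`s+g` highest-power levels contains at most one packet, exactly `s` of them contain
exactly one packet (so `g` are idle), and the next level (the paper's level `s+g+1`,
index `s+g`) contains a power collision (at least two packets). -/
theorem stmt2 (U L s g : ℕ) (hs : 1 ≤ s) (hsU : s < U) (hg : 0 ≤ g) (hL : s + g + 1 ≤ L) :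
    ((Finset.univ.filter (fun f : Fin U → Fin L =>
        (∀ l : Fin L, (l : ℕ) < s + g → levelCount f l ≤ 1) ∧
        (Finset.univ.filter
          (fun l : Fin L => (l : ℕ) < s + g ∧ levelCount f l = 1)).card = s ∧
        2 ≤ levelCount f ⟨s + g, lt_of_lt_of_le (Nat.lt_succ_self _) hL⟩)).card : ℤ)
    = (U.choose s : ℤ) * (Nat.factorial s : ℤ) * ((s + g).choose s : ℤ) *
        (((L : ℤ) - s - g) ^ (U - s) - ((L : ℤ) - s - g - 1) ^ (U - s)
          - ((U : ℤ) - s) * ((L : ℤ) - s - g - 1) ^ (U - s - 1)) := by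
  have hnL : s + g < L := lt_of_lt_of_le (Nat.lt_succ_self _) hL
  set n : ℕ := s + g with hn
  set ln : Fin L := ⟨n, hnL⟩ with hln
  -- the low and high level types
  let LowT := {l : Fin L // (l : ℕ) < n}
  let HighT := {l : Fin L // n ≤ (l : ℕ)}
  have cardLow : Fintype.card LowT = n :=
    Fintype.card_congr ⟨fun l => ⟨l.1.1, l.2⟩, fun i => ⟨⟨i.1, lt_trans i.2 hnL⟩, i.2⟩,
      fun l => by ext; rfl, fun i => by ext; rfl⟩ |>.trans (Fintype.card_fin n)
  have cardHigh : Fintype.card HighT = L - n := by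
    refine (Fintype.card_congr (⟨fun l => ⟨l.1.1 - n, by omega⟩,
      fun i => ⟨⟨n + i.1, by omega⟩, by simp⟩, fun l => ?_, fun i => ?_⟩ :
        HighT ≃ Fin (L - n))).trans (Fintype.card_fin (L - n))
    · have := l.2; ext; simp; omega
    · have := i.2; ext; simp
  set b0 : HighT := ⟨ln, le_refl n⟩ with hb0
  -- Step A : rewrite the predicate
  have hQ : (Finset.univ.filter (fun f : Fin U → Fin L =>
        (∀ l : Fin L, (l : ℕ) < s + g → levelCount f l ≤ 1) ∧
        (Finset.univ.filter
          (fun l : Fin L => (l : ℕ) < s + g ∧ levelCount f l = 1)).card = s ∧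
        2 ≤ levelCount f ⟨s + g, lt_of_lt_of_le (Nat.lt_succ_self _) hL⟩))
      = (Finset.univ.filter (fun f : Fin U → Fin L =>
        (∀ l : Fin L, (l : ℕ) < n → levelCount f l ≤ 1) ∧
        #(univ.filter fun u : Fin U => ((f u) : ℕ) < n) = s ∧
        2 ≤ levelCount f ln)) := by
    apply Finset.filter_congr
    intro f _
    constructor
    · rintro ⟨hA, hB, hC⟩
      exact ⟨hA, by rw [← low_card n f hA]; exact hB, hC⟩
    · rintro ⟨hA, hB, hC⟩
      exact ⟨hA, by rw [low_card n f hA]; exact hB, hC⟩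
  rw [hQ]
  -- Step B : fiber over the set of packets mapped to low levels
  rw [Finset.card_eq_sum_card_fiberwise
    (f := fun f : Fin U → Fin L => univ.filter fun u : Fin U => ((f u) : ℕ) < n)
    (t := Finset.powersetCard s (univ : Finset (Fin U)))
    (fun f hf => by
      rw [Finset.mem_coe, Finset.mem_powersetCard_univ]
      exact (mem_filter.1 (Finset.mem_coe.1 hf)).2.2.1)]
  -- Step C : count each fiber
  have step : ∀ S ∈ Finset.powersetCard s (univ : Finset (Fin U)),
      ((((univ.filter (fun f : Fin U → Fin L =>
        (∀ l : Fin L, (l : ℕ) < n → levelCount f l ≤ 1) ∧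
        #(univ.filter fun u : Fin U => ((f u) : ℕ) < n) = s ∧
        2 ≤ levelCount f ln)).filter
          (fun f => (univ.filter fun u : Fin U => ((f u) : ℕ) < n) = S)).card : ℤ))
      = (n.descFactorial s : ℤ) *
        (((L : ℤ) - s - g) ^ (U - s) - ((L : ℤ) - s - g - 1) ^ (U - s)
          - ((U : ℤ) - s) * ((L : ℤ) - s - g - 1) ^ (U - s - 1)) := by
    intro S hS
    rw [Finset.mem_powersetCard_univ] at hS
    rw [Finset.filter_filter]
    set T1 : Finset ({x : Fin U // x ∈ S} → LowT) := univ.filter Function.Injective with hT1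
    set T2 : Finset ({x : Fin U // x ∉ S} → HighT) :=
      univ.filter (fun h => 2 ≤ #(univ.filter (fun x => h x = b0))) with hT2
    have hbij : (univ.filter (fun f : Fin U → Fin L =>
        ((∀ l : Fin L, (l : ℕ) < n → levelCount f l ≤ 1) ∧
        #(univ.filter fun u : Fin U => ((f u) : ℕ) < n) = s ∧
        2 ≤ levelCount f ln) ∧
        (univ.filter fun u : Fin U => ((f u) : ℕ) < n) = S)).card
        = (T1 ×ˢ T2).card := by
      refine Finset.card_bij'
        (fun f hf =>
          (fun x => (⟨f x.1, by
            have hfib := (mem_filter.1 hf).2.2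
            have : x.1 ∈ univ.filter fun u : Fin U => ((f u) : ℕ) < n := hfib ▸ x.2
            exact (mem_filter.1 this).2⟩ : LowT),
           fun x => (⟨f x.1, by
            have hfib := (mem_filter.1 hf).2.2
            by_contra hlt
            have hmem : x.1 ∈ univ.filter fun u : Fin U => ((f u) : ℕ) < n :=
              mem_filter.2 ⟨mem_univ _, by omega⟩
            rw [hfib] at hmem
            exact x.2 hmem⟩ : HighT)))
        (fun p hp =>
          fun u => if hu : u ∈ S then (p.1 ⟨u, hu⟩).1 else (p.2 ⟨u, hu⟩).1)
        ?_ ?_ ?_ ?_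
      · -- i maps into T1 ×ˢ T2
        intro f hf
        obtain ⟨-, ⟨hA, hB, hC⟩, hfib⟩ := mem_filter.1 hf
        rw [Finset.mem_product]
        constructor
        · rw [hT1, mem_filter]
          refine ⟨mem_univ _, fun x y hxy => ?_⟩
          by_contra hne
          have hxy' : f x.1 = f y.1 := Subtype.ext_iff.1 hxy
          have hne' : x.1 ≠ y.1 := fun h => hne (Subtype.ext h)
          have hlow : ((f x.1 : Fin L) : ℕ) < n := by
            have : x.1 ∈ univ.filter fun u : Fin U => ((f u) : ℕ) < n := hfib ▸ x.2
            exact (mem_filter.1 this).2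
          have h2 : 2 ≤ levelCount f (f x.1) := by
            unfold levelCount
            refine Finset.one_lt_card.2 ⟨x.1, mem_filter.2 ⟨mem_univ _, rfl⟩,
              y.1, mem_filter.2 ⟨mem_univ _, hxy'.symm⟩, hne'⟩
          have := hA (f x.1) hlow
          omega
        · rw [hT2, mem_filter]
          refine ⟨mem_univ _, ?_⟩
          obtain ⟨u, hu, v, hv, huv⟩ := Finset.one_lt_card.1 hC
          have hu' : f u = ln := (mem_filter.1 hu).2
          have hv' : f v = ln := (mem_filter.1 hv).2
          have huS : u ∉ S := fun h => by
            have h1 : u ∈ univ.filter fun u : Fin U => ((f u) : ℕ) < n := hfib ▸ h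
            have h2 := (mem_filter.1 h1).2
            rw [hu'] at h2; simp [hln] at h2
          have hvS : v ∉ S := fun h => by
            have h1 : v ∈ univ.filter fun u : Fin U => ((f u) : ℕ) < n := hfib ▸ h
            have h2 := (mem_filter.1 h1).2
            rw [hv'] at h2; simp [hln] at h2
          refine Finset.one_lt_card.2 ⟨⟨u, huS⟩, mem_filter.2 ⟨mem_univ _, Subtype.ext hu'⟩,
            ⟨v, hvS⟩, mem_filter.2 ⟨mem_univ _, Subtype.ext hv'⟩,
            fun h => huv (congrArg Subtype.val h)⟩
      · -- j maps into the fiber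
        intro p hp
        beta_reduce
        rw [Finset.mem_product, hT1, hT2, mem_filter, mem_filter] at hp
        obtain ⟨⟨-, hinj⟩, -, htail⟩ := hp
        set jf : Fin U → Fin L :=
          fun u => if hu : u ∈ S then (p.1 ⟨u, hu⟩).1 else (p.2 ⟨u, hu⟩).1 with hjf
        have hjlow : ∀ u : Fin U, ((jf u : Fin L) : ℕ) < n ↔ u ∈ S := by
          intro u
          by_cases hu : u ∈ S
          · simp only [hjf, dif_pos hu]
            exact ⟨fun _ => hu, fun _ => (p.1 ⟨u, hu⟩).2⟩
          · simp only [hjf, dif_neg hu]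
            have := (p.2 ⟨u, hu⟩).2
            exact ⟨fun h => absurd h (by omega), fun h => absurd h hu⟩
        have hfib : (univ.filter fun u : Fin U => ((jf u) : ℕ) < n) = S := by
          ext u
          simp only [mem_filter, mem_univ, true_and]
          exact hjlow u
        rw [mem_filter]
        refine ⟨mem_univ _, ⟨?_, by rw [hfib]; exact hS, ?_⟩, hfib⟩
        · -- at most one packet per low level
          intro l hl
          unfold levelCount
          rw [Finset.card_le_one]
          intro a ha b hb
          have ha' := (mem_filter.1 ha).2
          have hb' := (mem_filter.1 hb).2
          have haS : a ∈ S := (hjlow a).1 (by rw [ha']; exact hl)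
          have hbS : b ∈ S := (hjlow b).1 (by rw [hb']; exact hl)
          have h1 : (p.1 ⟨a, haS⟩).1 = l := by
            have : jf a = l := ha'
            simpa only [hjf, dif_pos haS] using this
          have h2 : (p.1 ⟨b, hbS⟩).1 = l := by
            have : jf b = l := hb'
            simpa only [hjf, dif_pos hbS] using this
          have : (⟨a, haS⟩ : {x : Fin U // x ∈ S}) = ⟨b, hbS⟩ :=
            hinj (Subtype.ext (h1.trans h2.symm))
          exact congrArg Subtype.val this
        · -- collision at level n
          unfold levelCount
          have hjx : ∀ x : {x : Fin U // x ∉ S}, jf x.1 = (p.2 x).1 := fun x => by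
            simp only [hjf, dif_neg x.2]
          have heq : #(univ.filter (fun x : {x : Fin U // x ∉ S} => jf x.1 = ln))
              = #(univ.filter (fun u : Fin U => jf u = ln)) :=
            card_filter_subtype (fun u => u ∉ S) (fun u => jf u = ln)
              (fun u hu huS => by
                have := (hjlow u).2 huS
                rw [hu] at this
                simp [hln] at this)
          rw [← heq]
          have hset : (univ.filter (fun x : {x : Fin U // x ∉ S} => jf x.1 = ln))
              = (univ.filter (fun x : {x : Fin U // x ∉ S} => p.2 x = b0)) :=
            Finset.filter_congr (fun x _ => by
              rw [hjx x]
              exact ⟨fun h => Subtype.ext h, fun h => congrArg Subtype.val h⟩)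
          rw [hset]
          exact htail
      · -- left inverse
        intro f hf
        funext u
        by_cases hu : u ∈ S <;> simp [hu]
      · -- right inverse
        intro p hp
        ext x
        · simp [dif_pos x.2]
        · simp [dif_neg x.2]
    rw [hbij, Finset.card_product]
    have hcT1 : T1.card = n.descFactorial s := by
      rw [hT1, ← Fintype.card_subtype,
        Fintype.card_congr (Equiv.subtypeInjectiveEquivEmbedding _ _),
        Fintype.card_embedding_eq, cardLow, Fintype.card_coe, hS]
    have hαcard : Fintype.card {x : Fin U // x ∉ S} = U - s := by
      rw [Fintype.card_subtype_compl, Fintype.card_fin, Fintype.card_coe, hS]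
    have htail := count_tail (α := {x : Fin U // x ∉ S}) (β := HighT) b0
    rw [cardHigh, hαcard] at htail
    rw [← hT2] at htail
    have hT2card : ((T2.card : ℤ))
        = (((L : ℤ) - s - g) ^ (U - s) - ((L : ℤ) - s - g - 1) ^ (U - s)
          - ((U : ℤ) - s) * ((L : ℤ) - s - g - 1) ^ (U - s - 1)) := by
      have hcast := congrArg (Nat.cast : ℕ → ℤ) htail
      push_cast at hcast
      have c1 : ((L - n - 1 : ℕ) : ℤ) = (L : ℤ) - s - g - 1 := by
        clear * - hn hnL; omega
      have c2 : ((L - n : ℕ) : ℤ) = (L : ℤ) - s - g := by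
        clear * - hn hnL; omega
      have c3 : ((U - s : ℕ) : ℤ) = (U : ℤ) - s := by
        clear * - hsU; omega
      rw [c1, c2, c3] at hcast
      linarith
    rw [hcT1]
    push_cast
    rw [hT2card]
  rw [Nat.cast_sum, Finset.sum_congr rfl step, Finset.sum_const,
    Finset.card_powersetCard, Finset.card_univ, Fintype.card_fin, nsmul_eq_mul]
  rw [hn, Nat.descFactorial_eq_factorial_mul_choose]
  push_cast
  ring
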